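/- Fix a measurable partition A_1, …, A_ρ of ℝ^d and set k = ρ·(d(d+1)/2 + 1). There exist a measurable map T : ℝ^d → ℝ^k and the function h(x) = (2π)^{-d/2}, not depending on any precision matrices, such that for every choice of positive definite real d×d matrices K_1, …, K_ρ and every Z > 0 there are η ∈ ℝ^k and ψ ∈ ℝ with the property that the piecewise Gaussian density g(x) = (1/Z) ∑_{r=1}^{ρ} f_{K_r}(x) 1_{A_r}(x) satisfies g(x) = h(x) exp(⟨η, T(x)⟩ - ψ) for all x ∈ ℝ^d. -/

import Mathlib

open MeasureTheory Matrix Real Set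

/-- The centered Gaussian density with precision matrix `K`:
`f_K(x) = (2π)^(-d/2) * (det K)^(1/2) * exp(-(1/2) xᵀ K x)`. -/
noncomputable def gaussianDensityPrec {d : ℕ} (K : Matrix (Fin d) (Fin d) ℝ)
    (x : Fin d → ℝ) : ℝ :=
  (2 * π) ^ (-(d : ℝ) / 2) * Real.sqrt K.det *
    Real.exp (-(1 / 2) * (x ⬝ᵥ K.mulVec x))


lemma quad_sum' {d : ℕ} (K : Matrix (Fin d) (Fin d) ℝ) (x : Fin d → ℝ) :
    ∑ p : {p : Fin d × Fin d // p.1 ≤ p.2},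
      (if p.val.1 = p.val.2 then K p.val.1 p.val.1
        else K p.val.1 p.val.2 + K p.val.2 p.val.1) * (x p.val.1 * x p.val.2)
      = x ⬝ᵥ K.mulVec x := by
  have hsub : ∑ p : {p : Fin d × Fin d // p.1 ≤ p.2},
      (if p.val.1 = p.val.2 then K p.val.1 p.val.1
        else K p.val.1 p.val.2 + K p.val.2 p.val.1) * (x p.val.1 * x p.val.2)
      = ∑ p : Fin d × Fin d, (if p.1 ≤ p.2 then
          (if p.1 = p.2 then K p.1 p.1 else K p.1 p.2 + K p.2 p.1) * (x p.1 * x p.2)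
          else 0) := by
    rw [← Finset.sum_filter]
    exact (Finset.sum_subtype (p := fun p : Fin d × Fin d => p.1 ≤ p.2)
      (Finset.univ.filter fun p : Fin d × Fin d => p.1 ≤ p.2)
      (fun p => by simp)
      (fun p => (if p.1 = p.2 then K p.1 p.1 else K p.1 p.2 + K p.2 p.1)
        * (x p.1 * x p.2))).symm
  rw [hsub]
  have hsplit : ∀ p : Fin d × Fin d,
      (if p.1 ≤ p.2 then
          (if p.1 = p.2 then K p.1 p.1 else K p.1 p.2 + K p.2 p.1) * (x p.1 * x p.2)
          else 0)
      = (if p.1 ≤ p.2 then K p.1 p.2 * (x p.1 * x p.2) else 0)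
        + (if p.1 < p.2 then K p.2 p.1 * (x p.1 * x p.2) else 0) := by
    intro p
    rcases lt_trichotomy p.1 p.2 with h | h | h
    · rw [if_pos h.le, if_pos h.le, if_pos h, if_neg h.ne]; ring
    · rw [if_pos h.le, if_pos h.le, if_pos h, if_neg (lt_irrefl _ ∘ (h ▸ ·))]
      rw [h]; ring
    · rw [if_neg (not_le.2 h), if_neg (not_le.2 h), if_neg (not_lt.2 h.le)]; ring
  rw [Finset.sum_congr rfl (fun p _ => hsplit p), Finset.sum_add_distrib]
  have hswap : ∑ p : Fin d × Fin d, (if p.1 < p.2 then K p.2 p.1 * (x p.1 * x p.2) else 0)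
      = ∑ p : Fin d × Fin d, (if p.2 < p.1 then K p.1 p.2 * (x p.1 * x p.2) else 0) := by
    apply Fintype.sum_equiv (Equiv.prodComm _ _)
    intro p
    simp only [Equiv.prodComm_apply, Prod.fst_swap, Prod.snd_swap]
    ring_nf
  rw [hswap, ← Finset.sum_add_distrib]
  have : ∀ p : Fin d × Fin d,
      (if p.1 ≤ p.2 then K p.1 p.2 * (x p.1 * x p.2) else 0)
        + (if p.2 < p.1 then K p.1 p.2 * (x p.1 * x p.2) else 0)
      = K p.1 p.2 * (x p.1 * x p.2) := by
    intro p
    rcases le_or_gt p.1 p.2 with h | h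
    · rw [if_pos h, if_neg (not_lt.2 h), add_zero]
    · rw [if_neg (not_le.2 h), if_pos h, zero_add]
  rw [Finset.sum_congr rfl (fun p _ => this p), Fintype.sum_prod_type]
  simp [dotProduct, Matrix.mulVec, Finset.mul_sum]
  congr 1; ext i; congr 1; ext j; ring

lemma tri_card (d : ℕ) :
    Fintype.card {p : Fin d × Fin d // p.1 ≤ p.2} = d * (d + 1) / 2 := by
  rw [← Fintype.card_congr (Sym2.sortEquiv (α := Fin d))]
  rw [Sym2.card, Fintype.card_fin, Nat.choose_two_right]
  simp [Nat.mul_comm]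


/-- The family of piecewise Gaussian densities over a fixed measurable partition
`A 1, …, A ρ` of `ℝ^d` is an exponential family: with `k = ρ (d(d+1)/2 + 1)` there is a
fixed measurable sufficient statistic `T : ℝ^d → ℝ^k` and base function
`h(x) = (2π)^(-d/2)` such that for every choice of positive definite precision matrices
`K 1, …, K ρ` and every `Z > 0` there are a natural parameter `η ∈ ℝ^k` and `ψ ∈ ℝ` with
`g(x) = (1/Z) ∑ r, f_{K r}(x) 1_{A r}(x) = h(x) exp(⟨η, T(x)⟩ - ψ)` for all `x`. -/
theorem piecewiseGaussian_exponentialFamily {d ρ : ℕ}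
    (A : Fin ρ → Set (Fin d → ℝ))
    (hAmeas : ∀ r, MeasurableSet (A r))
    (hAdisj : Pairwise (Function.onFun Disjoint A))
    (hAcover : (⋃ r, A r) = Set.univ) :
    ∃ T : (Fin d → ℝ) → (Fin (ρ * (d * (d + 1) / 2 + 1)) → ℝ), Measurable T ∧
      ∀ (K : Fin ρ → Matrix (Fin d) (Fin d) ℝ), (∀ r, (K r).PosDef) →
        ∀ Z : ℝ, 0 < Z →
          ∃ (η : Fin (ρ * (d * (d + 1) / 2 + 1)) → ℝ) (ψ : ℝ),
            ∀ x : Fin d → ℝ,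
              (1 / Z) * ∑ r, (A r).indicator (gaussianDensityPrec (K r)) x =
                (2 * π) ^ (-(d : ℝ) / 2) * Real.exp (η ⬝ᵥ T x - ψ) := by
  classical
  set S := {p : Fin d × Fin d // p.1 ≤ p.2}
  set q := d * (d + 1) / 2 with hq
  have eS : S ≃ Fin q := Fintype.equivFinOfCardEq (tri_card d)
  set e : Fin ρ × (S ⊕ Fin 1) ≃ Fin (ρ * (q + 1)) :=
    (Equiv.prodCongr (Equiv.refl (Fin ρ))
      ((eS.sumCongr (Equiv.refl (Fin 1))).trans finSumFinEquiv)).trans finProdFinEquiv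
    with he
  -- the sufficient statistic
  refine ⟨fun x i => match e.symm i with
    | (r, Sum.inl p) => (A r).indicator (fun y => y p.val.1 * y p.val.2) x
    | (r, Sum.inr _) => (A r).indicator 1 x, ?_, ?_⟩
  · apply measurable_pi_lambda
    intro i
    rcases h : e.symm i with ⟨r, p | u⟩
    · simp only [h]
      exact Measurable.indicator
        ((measurable_pi_apply p.val.1).mul (measurable_pi_apply p.val.2)) (hAmeas r)
    · simp only [h]
      exact measurable_const.indicator (hAmeas r)
  · intro K hK Z hZ
    refine ⟨fun i => match e.symm i with
      | (r, Sum.inl p) => -(1/2) * (if p.val.1 = p.val.2 then K r p.val.1 p.val.1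
          else K r p.val.1 p.val.2 + K r p.val.2 p.val.1)
      | (r, Sum.inr _) => Real.log (Real.sqrt (K r).det / Z), 0, ?_⟩
    intro x
    -- unique region containing x
    have hx : x ∈ ⋃ r, A r := hAcover ▸ Set.mem_univ x
    obtain ⟨r0, hr0⟩ := Set.mem_iUnion.mp hx
    have hnot : ∀ r, r ≠ r0 → x ∉ A r := by
      intro r hr hxr
      exact (hAdisj hr).le_bot ⟨hxr, hr0⟩
    -- compute the dot product
    have hdot : (fun i => match e.symm i with
      | (r, Sum.inl p) => -(1/2) * (if p.val.1 = p.val.2 then K r p.val.1 p.val.1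
          else K r p.val.1 p.val.2 + K r p.val.2 p.val.1)
      | (r, Sum.inr _) => Real.log (Real.sqrt (K r).det / Z)) ⬝ᵥ
        (fun i => match e.symm i with
      | (r, Sum.inl p) => (A r).indicator (fun y => y p.val.1 * y p.val.2) x
      | (r, Sum.inr _) => (A r).indicator 1 x)
      = -(1/2) * (x ⬝ᵥ (K r0).mulVec x) + Real.log (Real.sqrt (K r0).det / Z) := by
      rw [dotProduct]
      rw [← Fintype.sum_equiv e (fun j => _) _ (fun j => by rw [Equiv.symm_apply_apply])]
      · rw [Fintype.sum_prod_type]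
        have hterm : ∀ r : Fin ρ, (∑ j : S ⊕ Fin 1,
            (match (r, j) with
              | (r, Sum.inl p) => -(1/2) * (if p.val.1 = p.val.2 then K r p.val.1 p.val.1
                  else K r p.val.1 p.val.2 + K r p.val.2 p.val.1)
              | (r, Sum.inr _) => Real.log (Real.sqrt (K r).det / Z)) *
            (match (r, j) with
              | (r, Sum.inl p) => (A r).indicator (fun y => y p.val.1 * y p.val.2) x
              | (r, Sum.inr _) => (A r).indicator 1 x))
            = if x ∈ A r then -(1/2) * (x ⬝ᵥ (K r).mulVec x)
                + Real.log (Real.sqrt (K r).det / Z) else 0 := by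
          intro r
          rw [Fintype.sum_sum_type]
          by_cases hxr : x ∈ A r
          · rw [if_pos hxr]
            simp only [Set.indicator_of_mem hxr, Pi.one_apply, Finset.sum_const,
              Finset.card_univ, Fintype.card_fin, one_smul, mul_one]
            rw [← quad_sum' (K r) x, Finset.mul_sum]
            congr 1
            exact Finset.sum_congr rfl fun p _ => by ring
          · rw [if_neg hxr]
            simp [Set.indicator_of_notMem hxr]
        rw [Finset.sum_congr rfl fun r _ => hterm r]
        rw [Finset.sum_eq_single_of_mem r0 (Finset.mem_univ _)
          (fun r _ hr => if_neg (hnot r hr))]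
        rw [if_pos hr0]
    rw [hdot]
    -- compute the LHS sum
    have hsum : ∑ r, (A r).indicator (gaussianDensityPrec (K r)) x
        = gaussianDensityPrec (K r0) x := by
      rw [Finset.sum_eq_single_of_mem r0 (Finset.mem_univ _)
        (fun r _ hr => Set.indicator_of_notMem (hnot r hr) _)]
      exact Set.indicator_of_mem hr0 _
    rw [hsum, gaussianDensityPrec]
    have hdet : 0 < Real.sqrt (K r0).det := Real.sqrt_pos.mpr (hK r0).det_pos
    have hpos : 0 < Real.sqrt (K r0).det / Z := div_pos hdet hZ
    rw [sub_zero, Real.exp_add, Real.exp_log hpos]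
    field_simp
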